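/- Inequality-based pruning (Theorem 3 of the paper): assume h : {1,…,n} → ℝ is nonnegative and nondecreasing, and set K = 2β + h(1) + h(n). Let 1 ≤ t < n and τ ∈ T_t. If inf_{φ∈ℝ} f_τ^t(φ) > inf_{φ'∈ℝ} f^t(φ') + K, then for every integer T with t < T ≤ n and every φ ∈ ℝ one has f_τ^T(φ) > f^T(φ), where τ is viewed as an element of T_T; in particular the changepoint vector τ can never be optimal for the data y_{1:T}. -/

import Mathlib

open Finset

/-- Segment cost `C(s,t,φ,ψ)`: cost of fitting data `y_{s+1:t}` with a linear
function taking value `φ` at time `s` and value `ψ` at time `t`. -/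
noncomputable def segCost (y : ℕ → ℝ) (σ : ℝ) (s t : ℕ) (φ ψ : ℝ) : ℝ :=
  (1 / σ ^ 2) * ∑ j ∈ Finset.Icc (s + 1) t,
    (y j - φ - ((ψ - φ) / ((t : ℝ) - (s : ℝ))) * ((j : ℝ) - (s : ℝ))) ^ 2

/-- `ValidCP t τ` : `τ` is a (possibly empty) strictly increasing vector of
changepoints `0 < τ₁ < ⋯ < τ_k < t`, i.e. an element of `T_t`. -/
def ValidCP (t : ℕ) (τ : List ℕ) : Prop :=
  τ.Chain' (· < ·) ∧ ∀ x ∈ τ, 0 < x ∧ x < t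

/-- Penalised cost of segmenting `y_{1:t}` with changepoints `τ = (τ₁,…,τ_k)`,
fitted values `φs 0, …, φs k` at times `0, τ₁, …, τ_k`, and fitted value `φ` at time `t`. -/
noncomputable def segTotal (y : ℕ → ℝ) (σ β : ℝ) (h : ℕ → ℝ) (t : ℕ)
    (τ : List ℕ) (φs : ℕ → ℝ) (φ : ℝ) : ℝ :=
  let p : ℕ → ℕ := fun i => (0 :: τ).getD i 0
  (∑ i ∈ Finset.range τ.length,
      (segCost y σ (p i) (p (i + 1)) (φs i) (φs (i + 1)) + h (p (i + 1) - p i)))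
    + segCost y σ (p τ.length) t (φs τ.length) φ + h (t - p τ.length)
    + β * ((τ.length : ℝ) + 1)

/-- `f_τ^t(φ)` : minimum penalised cost of segmenting `y_{1:t}` with changepoints `τ`
and fitted value `φ` at time `t`, minimised over the fitted values at the changepoints. -/
noncomputable def fseg (y : ℕ → ℝ) (σ β : ℝ) (h : ℕ → ℝ) (t : ℕ)
    (τ : List ℕ) (φ : ℝ) : ℝ :=
  ⨅ φs : ℕ → ℝ, segTotal y σ β h t τ φs φ

/-- `f^t(φ)` : minimum penalised cost of segmenting `y_{1:t}` with fitted value `φ`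
at time `t`, minimised over all changepoint vectors in `T_t`; `f^0 ≡ 0`. -/
noncomputable def fDP (y : ℕ → ℝ) (σ β : ℝ) (h : ℕ → ℝ) (t : ℕ) (φ : ℝ) : ℝ :=
  if t = 0 then 0 else ⨅ τ : {τ : List ℕ // ValidCP t τ}, fseg y σ β h t τ.1 φ

/- ------------------- auxiliary lemmas ------------------- -/

private lemma segCost_nonneg (y : ℕ → ℝ) (σ : ℝ) (s t : ℕ) (φ ψ : ℝ) :
    0 ≤ segCost y σ s t φ ψ :=
  mul_nonneg (div_nonneg zero_le_one (sq_nonneg σ))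
    (Finset.sum_nonneg fun _ _ => sq_nonneg _)

private lemma segTotal_def (y : ℕ → ℝ) (σ β : ℝ) (h : ℕ → ℝ) (t : ℕ) (τ : List ℕ)
    (φs : ℕ → ℝ) (φ : ℝ) :
    segTotal y σ β h t τ φs φ =
      (∑ i ∈ Finset.range τ.length,
        (segCost y σ (((0:ℕ)::τ).getD i 0) (((0:ℕ)::τ).getD (i+1) 0) (φs i) (φs (i+1))
          + h (((0:ℕ)::τ).getD (i+1) 0 - ((0:ℕ)::τ).getD i 0)))
      + segCost y σ (((0:ℕ)::τ).getD τ.length 0) t (φs τ.length) φ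
      + h (t - ((0:ℕ)::τ).getD τ.length 0) + β * ((τ.length : ℝ) + 1) := rfl

/-- cost of a unit segment depends only on the right endpoint value -/
private lemma segCost_succ (y : ℕ → ℝ) (σ : ℝ) (t : ℕ) (a b : ℝ) :
    segCost y σ t (t+1) a b = 1 / σ ^ 2 * (y (t+1) - b) ^ 2 := by
  unfold segCost
  rw [Finset.Icc_self, Finset.sum_singleton]
  have h1 : ((t+1 : ℕ) : ℝ) - (t : ℕ) = 1 := by push_cast; ring
  rw [h1]
  congr 1
  ring

/-- splitting the cost of one segment at an intermediate time -/
private lemma segCost_split (y : ℕ → ℝ) (σ : ℝ) {s t T : ℕ} (hst : s < t) (htT : t < T)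
    (a b m : ℝ)
    (hm : m = a + (b - a) * (((t:ℕ):ℝ) - ((s:ℕ):ℝ)) / (((T:ℕ):ℝ) - ((s:ℕ):ℝ))) :
    segCost y σ s T a b = segCost y σ s t a m + segCost y σ t T m b := by
  have hts : ((s:ℕ):ℝ) < ((t:ℕ):ℝ) := by exact_mod_cast hst
  have htT' : ((t:ℕ):ℝ) < ((T:ℕ):ℝ) := by exact_mod_cast htT
  have h1 : ((t:ℕ):ℝ) - ((s:ℕ):ℝ) ≠ 0 := sub_ne_zero_of_ne hts.ne'
  have h2 : ((T:ℕ):ℝ) - ((s:ℕ):ℝ) ≠ 0 := sub_ne_zero_of_ne (by linarith : ((s:ℕ):ℝ) < ((T:ℕ):ℝ)).ne'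
  have h3 : ((T:ℕ):ℝ) - ((t:ℕ):ℝ) ≠ 0 := sub_ne_zero_of_ne htT'.ne'
  unfold segCost
  rw [← mul_add]
  congr 1
  rw [Finset.Icc_add_one_left_eq_Ioc, Finset.Icc_add_one_left_eq_Ioc, Finset.Icc_add_one_left_eq_Ioc,
    ← Finset.sum_Ioc_consecutive _ hst.le htT.le]
  congr 1
  · apply Finset.sum_congr rfl
    intro j _
    have key : (m - a) / (((t:ℕ):ℝ) - ((s:ℕ):ℝ)) = (b - a) / (((T:ℕ):ℝ) - ((s:ℕ):ℝ)) := by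
      rw [hm]; field_simp; ring
    rw [key]
  · apply Finset.sum_congr rfl
    intro j _
    have key : a + (b - a) / (((T:ℕ):ℝ) - ((s:ℕ):ℝ)) * (((j:ℕ):ℝ) - ((s:ℕ):ℝ))
        = m + (b - m) / (((T:ℕ):ℝ) - ((t:ℕ):ℝ)) * (((j:ℕ):ℝ) - ((t:ℕ):ℝ)) := by
      rw [hm]; field_simp; ring
    have key2 : y j - a - (b - a) / (((T:ℕ):ℝ) - ((s:ℕ):ℝ)) * (((j:ℕ):ℝ) - ((s:ℕ):ℝ))
        = y j - m - (b - m) / (((T:ℕ):ℝ) - ((t:ℕ):ℝ)) * (((j:ℕ):ℝ) - ((t:ℕ):ℝ)) := by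
      linarith
    rw [key2]

private lemma validCP_chain {t : ℕ} {τ : List ℕ} (hτ : ValidCP t τ) :
    ((0:ℕ) :: τ).Chain' (· < ·) := by
  cases τ with
  | nil => exact List.IsChain.singleton _
  | cons a l => exact List.isChain_cons_cons.mpr ⟨(hτ.2 a (by simp)).1, hτ.1⟩

private lemma p_lt_succ {t : ℕ} {τ : List ℕ} (hτ : ValidCP t τ) {i : ℕ} (hi : i < τ.length) :
    ((0:ℕ)::τ).getD i 0 < ((0:ℕ)::τ).getD (i+1) 0 := by
  have hc := validCP_chain hτ
  have h1 : i < ((0:ℕ)::τ).length - 1 := by simp; omega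
  have h2 := List.isChain_iff_getElem.mp hc i (by simp; omega)
  rwa [List.getD_eq_getElem _ _ (by simp; omega), List.getD_eq_getElem _ _ (by simp; omega)]

private lemma p_lt_t {t : ℕ} {τ : List ℕ} (hτ : ValidCP t τ) (ht : 1 ≤ t) (j : ℕ) :
    ((0:ℕ)::τ).getD j 0 < t := by
  cases j with
  | zero => simp; omega
  | succ i =>
    rw [List.getD_cons_succ]
    by_cases hi : i < τ.length
    · rw [List.getD_eq_getElem _ _ hi]
      exact (hτ.2 _ (List.getElem_mem hi)).2
    · rw [List.getD_eq_default _ _ (by omega)]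
      omega

private lemma segTotal_nonneg {n : ℕ} (y : ℕ → ℝ) (σ β : ℝ) (hβ : 0 ≤ β) (h : ℕ → ℝ)
    (hpos : ∀ i, 1 ≤ i → i ≤ n → 0 ≤ h i)
    {t : ℕ} (ht1 : 1 ≤ t) (htn : t ≤ n) {τ : List ℕ} (hτ : ValidCP t τ)
    (φs : ℕ → ℝ) (φ : ℝ) : 0 ≤ segTotal y σ β h t τ φs φ := by
  rw [segTotal_def]
  have hsum : (0:ℝ) ≤ ∑ i ∈ Finset.range τ.length,
      (segCost y σ (((0:ℕ)::τ).getD i 0) (((0:ℕ)::τ).getD (i+1) 0) (φs i) (φs (i+1))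
        + h (((0:ℕ)::τ).getD (i+1) 0 - ((0:ℕ)::τ).getD i 0)) := by
    apply Finset.sum_nonneg
    intro i hi
    have hi' := Finset.mem_range.mp hi
    have h1 := p_lt_succ hτ hi'
    have h2 := p_lt_t hτ ht1 (i+1)
    have h3 := hpos (((0:ℕ)::τ).getD (i+1) 0 - ((0:ℕ)::τ).getD i 0) (by omega) (by omega)
    have h4 := segCost_nonneg y σ (((0:ℕ)::τ).getD i 0) (((0:ℕ)::τ).getD (i+1) 0)
      (φs i) (φs (i+1))
    linarith
  have hlast1 := p_lt_t hτ ht1 τ.length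
  have hlast := hpos (t - ((0:ℕ)::τ).getD τ.length 0) (by omega) (by omega)
  have hc := segCost_nonneg y σ (((0:ℕ)::τ).getD τ.length 0) t (φs τ.length) φ
  have hb : (0:ℝ) ≤ β * ((τ.length : ℝ) + 1) := by positivity
  linarith

private lemma fseg_nonneg {n : ℕ} (y : ℕ → ℝ) (σ β : ℝ) (hβ : 0 ≤ β) (h : ℕ → ℝ)
    (hpos : ∀ i, 1 ≤ i → i ≤ n → 0 ≤ h i)
    {t : ℕ} (ht1 : 1 ≤ t) (htn : t ≤ n) {τ : List ℕ} (hτ : ValidCP t τ) (φ : ℝ) :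
    0 ≤ fseg y σ β h t τ φ :=
  Real.iInf_nonneg fun φs => segTotal_nonneg y σ β hβ h hpos ht1 htn hτ φs φ

private lemma fseg_le_segTotal {n : ℕ} (y : ℕ → ℝ) (σ β : ℝ) (hβ : 0 ≤ β) (h : ℕ → ℝ)
    (hpos : ∀ i, 1 ≤ i → i ≤ n → 0 ≤ h i)
    {t : ℕ} (ht1 : 1 ≤ t) (htn : t ≤ n) {τ : List ℕ} (hτ : ValidCP t τ)
    (φs : ℕ → ℝ) (φ : ℝ) :
    fseg y σ β h t τ φ ≤ segTotal y σ β h t τ φs φ :=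
  ciInf_le ⟨0, by rintro x ⟨g, rfl⟩; exact segTotal_nonneg y σ β hβ h hpos ht1 htn hτ g φ⟩ φs

private lemma fDP_le_fseg {n : ℕ} (y : ℕ → ℝ) (σ β : ℝ) (hβ : 0 ≤ β) (h : ℕ → ℝ)
    (hpos : ∀ i, 1 ≤ i → i ≤ n → 0 ≤ h i)
    {t : ℕ} (ht1 : 1 ≤ t) (htn : t ≤ n) {τ : List ℕ} (hτ : ValidCP t τ) (φ : ℝ) :
    fDP y σ β h t φ ≤ fseg y σ β h t τ φ := by
  unfold fDP
  rw [if_neg (by omega : ¬ t = 0)]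
  have hbdd : BddBelow (Set.range
      (fun τ' : {τ' : List ℕ // ValidCP t τ'} => fseg y σ β h t τ'.1 φ)) :=
    ⟨0, by rintro x ⟨τ', rfl⟩; exact fseg_nonneg y σ β hβ h hpos ht1 htn τ'.2 φ⟩
  exact ciInf_le hbdd ⟨τ, hτ⟩

/-- Lower bound: splitting the final segment of `τ` (for horizon `T`) at time `t`. -/
private lemma fseg_lower {n : ℕ} (y : ℕ → ℝ) (σ β : ℝ) (hβ : 0 ≤ β) (h : ℕ → ℝ)
    (hpos : ∀ i, 1 ≤ i → i ≤ n → 0 ≤ h i)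
    (hmono : ∀ i j, 1 ≤ i → i ≤ j → j ≤ n → h i ≤ h j)
    {t T : ℕ} (ht1 : 1 ≤ t) (htT : t < T) (hTn : T ≤ n)
    {τ : List ℕ} (hτ : ValidCP t τ) (φ : ℝ) :
    (⨅ ψ : ℝ, fseg y σ β h t τ ψ) + (⨅ ξ : ℝ, segCost y σ t T ξ φ)
      ≤ fseg y σ β h T τ φ := by
  have htn : t ≤ n := by omega
  apply le_ciInf
  intro φs
  have hpkt : ((0:ℕ)::τ).getD τ.length 0 < t := p_lt_t hτ ht1 τ.length
  set m : ℝ := φs τ.length + (φ - φs τ.length)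
      * (((t:ℕ):ℝ) - ((((0:ℕ)::τ).getD τ.length 0 : ℕ):ℝ))
      / (((T:ℕ):ℝ) - ((((0:ℕ)::τ).getD τ.length 0 : ℕ):ℝ)) with hmdef
  have hsplit := segCost_split y σ hpkt (show t < T by omega) (φs τ.length) φ m hmdef
  have hmono' : h (t - ((0:ℕ)::τ).getD τ.length 0) ≤ h (T - ((0:ℕ)::τ).getD τ.length 0) :=
    hmono _ _ (by omega) (by omega) (by omega)
  have e2 : fseg y σ β h t τ m ≤ segTotal y σ β h t τ φs m :=
    fseg_le_segTotal y σ β hβ h hpos ht1 htn hτ φs m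
  have e3 : (⨅ ψ : ℝ, fseg y σ β h t τ ψ) ≤ fseg y σ β h t τ m :=
    ciInf_le ⟨0, by rintro x ⟨g, rfl⟩; exact fseg_nonneg y σ β hβ h hpos ht1 htn hτ g⟩ m
  have e4 : (⨅ ξ : ℝ, segCost y σ t T ξ φ) ≤ segCost y σ t T m φ :=
    ciInf_le ⟨0, by rintro x ⟨g, rfl⟩; exact segCost_nonneg y σ t T g φ⟩ m
  have d1 := segTotal_def y σ β h T τ φs φ
  have d2 := segTotal_def y σ β h t τ φs m
  linarith [hsplit, hmono', e2, e3, e4, d1, d2]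

/-- appending two changepoints `[t, t+1]` -/
private lemma segTotal_append_two (y : ℕ → ℝ) (σ β : ℝ) (h : ℕ → ℝ) (t T : ℕ)
    (τ' : List ℕ) (φs : ℕ → ℝ) (φ' ψ' φ : ℝ) :
    segTotal y σ β h T (τ' ++ [t, t+1])
      (fun i => if i < τ'.length + 1 then φs i else if i = τ'.length + 1 then φ' else ψ') φ
    = segTotal y σ β h t τ' φs φ'
      + segCost y σ t (t+1) φ' ψ' + h 1
      + segCost y σ (t+1) T ψ' φ + h (T - (t+1)) + (β + β) := by
  set k := τ'.length with hk
  have hlen : (τ' ++ [t, t+1]).length = k + 2 := by simp [hk]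
  have hp : ∀ i ≤ k, ((0:ℕ) :: (τ' ++ [t, t+1])).getD i 0 = ((0:ℕ)::τ').getD i 0 := by
    intro i hi
    have e : ((0:ℕ) :: (τ' ++ [t, t+1])) = ((0:ℕ)::τ') ++ [t, t+1] := rfl
    rw [e, List.getD_append _ _ _ _ (by simp [hk]; omega)]
  have hpk1 : ((0:ℕ) :: (τ' ++ [t, t+1])).getD (k+1) 0 = t := by
    have e : ((0:ℕ) :: (τ' ++ [t, t+1])) = ((0:ℕ)::τ') ++ [t, t+1] := rfl
    rw [e, List.getD_append_right _ _ _ _ (by simp [hk])]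
    simp [hk]
  have hpk2 : ((0:ℕ) :: (τ' ++ [t, t+1])).getD (k+1+1) 0 = t+1 := by
    have e : ((0:ℕ) :: (τ' ++ [t, t+1])) = ((0:ℕ)::τ') ++ [t, t+1] := rfl
    rw [e, List.getD_append_right _ _ _ _ (by simp [hk])]
    have e2 : k + 1 + 1 - ((0:ℕ)::τ').length = 1 := by simp [hk]
    rw [e2]
    rfl
  have hpk2' : ((0:ℕ) :: (τ' ++ [t, t+1])).getD (k+2) 0 = t+1 := by
    rw [show k + 2 = k + 1 + 1 by omega]; exact hpk2
  rw [segTotal_def, segTotal_def, hlen, ← hk]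
  rw [Finset.sum_range_succ, Finset.sum_range_succ]
  have hsum : ∑ i ∈ Finset.range k,
      (segCost y σ (((0:ℕ) :: (τ' ++ [t, t+1])).getD i 0)
          (((0:ℕ) :: (τ' ++ [t, t+1])).getD (i+1) 0)
          ((fun i => if i < k + 1 then φs i else if i = k + 1 then φ' else ψ') i)
          ((fun i => if i < k + 1 then φs i else if i = k + 1 then φ' else ψ') (i+1))
        + h (((0:ℕ) :: (τ' ++ [t, t+1])).getD (i+1) 0 - ((0:ℕ) :: (τ' ++ [t, t+1])).getD i 0))
      = ∑ i ∈ Finset.range k,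
      (segCost y σ (((0:ℕ)::τ').getD i 0) (((0:ℕ)::τ').getD (i+1) 0) (φs i) (φs (i+1))
        + h (((0:ℕ)::τ').getD (i+1) 0 - ((0:ℕ)::τ').getD i 0)) := by
    apply Finset.sum_congr rfl
    intro i hi
    have hi' := Finset.mem_range.mp hi
    rw [hp i (by omega), hp (i+1) (by omega)]
    simp only []
    rw [if_pos (by omega : i < k + 1), if_pos (by omega : i + 1 < k + 1)]
  rw [hsum, hp k le_rfl, hpk1, hpk2]
  rw [show t + 1 - t = 1 by omega]
  have v1 : (if k < k + 1 then φs k else if k = k + 1 then φ' else ψ') = φs k :=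
    if_pos (by omega)
  have v2 : (if k + 1 < k + 1 then φs (k+1) else if k + 1 = k + 1 then φ' else ψ') = φ' := by
    rw [if_neg (by omega), if_pos rfl]
  have v3 : (if k + 1 + 1 < k + 1 then φs (k+1+1) else if k + 1 + 1 = k + 1 then φ' else ψ')
      = ψ' := by
    rw [if_neg (by omega), if_neg (by omega)]
  rw [v1, v2, v3]
  push_cast
  ring

/-- appending one changepoint `[t]` -/
private lemma segTotal_append_one (y : ℕ → ℝ) (σ β : ℝ) (h : ℕ → ℝ) (t T : ℕ)
    (τ' : List ℕ) (φs : ℕ → ℝ) (φ' φ : ℝ) :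
    segTotal y σ β h T (τ' ++ [t])
      (fun i => if i < τ'.length + 1 then φs i else φ') φ
    = segTotal y σ β h t τ' φs φ'
      + segCost y σ t T φ' φ + h (T - t) + β := by
  set k := τ'.length with hk
  have hlen : (τ' ++ [t]).length = k + 1 := by simp [hk]
  have hp : ∀ i ≤ k, ((0:ℕ) :: (τ' ++ [t])).getD i 0 = ((0:ℕ)::τ').getD i 0 := by
    intro i hi
    have e : ((0:ℕ) :: (τ' ++ [t])) = ((0:ℕ)::τ') ++ [t] := rfl
    rw [e, List.getD_append _ _ _ _ (by simp [hk]; omega)]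
  have hpk1 : ((0:ℕ) :: (τ' ++ [t])).getD (k+1) 0 = t := by
    have e : ((0:ℕ) :: (τ' ++ [t])) = ((0:ℕ)::τ') ++ [t] := rfl
    rw [e, List.getD_append_right _ _ _ _ (by simp [hk])]
    simp [hk]
  rw [segTotal_def, segTotal_def, hlen, ← hk]
  rw [Finset.sum_range_succ]
  have hsum : ∑ i ∈ Finset.range k,
      (segCost y σ (((0:ℕ) :: (τ' ++ [t])).getD i 0)
          (((0:ℕ) :: (τ' ++ [t])).getD (i+1) 0)
          ((fun i => if i < k + 1 then φs i else φ') i)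
          ((fun i => if i < k + 1 then φs i else φ') (i+1))
        + h (((0:ℕ) :: (τ' ++ [t])).getD (i+1) 0 - ((0:ℕ) :: (τ' ++ [t])).getD i 0))
      = ∑ i ∈ Finset.range k,
      (segCost y σ (((0:ℕ)::τ').getD i 0) (((0:ℕ)::τ').getD (i+1) 0) (φs i) (φs (i+1))
        + h (((0:ℕ)::τ').getD (i+1) 0 - ((0:ℕ)::τ').getD i 0)) := by
    apply Finset.sum_congr rfl
    intro i hi
    have hi' := Finset.mem_range.mp hi
    rw [hp i (by omega), hp (i+1) (by omega)]
    simp only []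
    rw [if_pos (by omega : i < k + 1), if_pos (by omega : i + 1 < k + 1)]
  rw [hsum, hp k le_rfl, hpk1]
  have v1 : (if k < k + 1 then φs k else φ') = φs k := if_pos (by omega)
  have v2 : (if k + 1 < k + 1 then φs (k+1) else φ') = φ' := if_neg (by omega)
  rw [v1, v2]
  push_cast
  ring

private lemma validCP_append_two {t T : ℕ} {τ' : List ℕ} (hτ' : ValidCP t τ')
    (ht1 : 1 ≤ t) (hT : t + 1 < T) : ValidCP T (τ' ++ [t, t+1]) := by
  constructor
  · apply List.IsChain.append hτ'.1
      (List.isChain_cons_cons.mpr ⟨Nat.lt_succ_self t, List.isChain_singleton _⟩)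
    intro x hx u hu
    have hx' : x ∈ τ' := by
      obtain ⟨hne, rfl⟩ := List.mem_getLast?_eq_getLast hx
      exact List.getLast_mem hne
    obtain rfl : t = u := by simpa using hu
    exact (hτ'.2 x hx').2
  · intro x hx
    rcases List.mem_append.mp hx with hx | hx
    · exact ⟨(hτ'.2 x hx).1, by have := (hτ'.2 x hx).2; omega⟩
    · simp at hx; rcases hx with rfl | rfl <;> omega

private lemma validCP_append_one {t T : ℕ} {τ' : List ℕ} (hτ' : ValidCP t τ')
    (ht1 : 1 ≤ t) (hT : t < T) : ValidCP T (τ' ++ [t]) := by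
  constructor
  · apply List.IsChain.append hτ'.1 (List.isChain_singleton _)
    intro x hx u hu
    have hx' : x ∈ τ' := by
      obtain ⟨hne, rfl⟩ := List.mem_getLast?_eq_getLast hx
      exact List.getLast_mem hne
    obtain rfl : t = u := by simpa using hu
    exact (hτ'.2 x hx').2
  · intro x hx
    rcases List.mem_append.mp hx with hx | hx
    · exact ⟨(hτ'.2 x hx).1, by have := (hτ'.2 x hx).2; omega⟩
    · simp at hx; subst hx; omega

/-- Theorem 3 of the paper, inequality-based pruning: if `h` is
nonnegative and nondecreasing, `K = 2β + h(1) + h(n)`, and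
`inf_φ f_τ^t(φ) > inf_{φ'} f^t(φ') + K`, then for every `T` with `t < T ≤ n` and
every `φ`, `f_τ^T(φ) > f^T(φ)`: the vector `τ` can never be optimal for `y_{1:T}`. -/
theorem statement10 (n : ℕ) (hn : 1 ≤ n) (y : ℕ → ℝ) (σ : ℝ) (hσ : 0 < σ)
    (β : ℝ) (hβ : 0 < β) (h : ℕ → ℝ)
    (hpos : ∀ i, 1 ≤ i → i ≤ n → 0 ≤ h i)
    (hmono : ∀ i j, 1 ≤ i → i ≤ j → j ≤ n → h i ≤ h j)
    (t : ℕ) (ht1 : 1 ≤ t) (htn : t < n)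
    (τ : List ℕ) (hτ : ValidCP t τ)
    (hineq : (⨅ φ' : ℝ, fDP y σ β h t φ') + (2 * β + h 1 + h n)
      < ⨅ φ : ℝ, fseg y σ β h t τ φ) :
    ∀ T : ℕ, t < T → T ≤ n → ∀ φ : ℝ, fDP y σ β h T φ < fseg y σ β h T τ φ := by
  intro T hT hTn φ
  have hβ' : (0:ℝ) ≤ β := le_of_lt hβ
  haveI : Nonempty {τ' : List ℕ // ValidCP t τ'} := ⟨⟨[], ⟨List.IsChain.nil, by simp⟩⟩⟩
  set S : ℝ := ⨅ φ' : ℝ, fDP y σ β h t φ' with hS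
  set Mt : ℝ := ⨅ ψ : ℝ, fseg y σ β h t τ ψ with hMt
  set Cin : ℝ := ⨅ ξ : ℝ, segCost y σ t T ξ φ with hCin
  set K : ℝ := 2 * β + h 1 + h n with hK
  have hKM : S + K < Mt := hineq
  set ε : ℝ := (Mt - (S + K)) / 4 with hε
  have hεpos : 0 < ε := by rw [hε]; linarith
  -- extract near-optimal segmentation for `S`
  obtain ⟨φ₀, hφ₀⟩ : ∃ φ₀ : ℝ, fDP y σ β h t φ₀ < S + ε := by
    apply exists_lt_of_ciInf_lt
    rw [← hS]; linarith
  have hfdp : fDP y σ β h t φ₀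
      = ⨅ τ' : {τ' : List ℕ // ValidCP t τ'}, fseg y σ β h t τ'.1 φ₀ := by
    unfold fDP; rw [if_neg (by omega : ¬ t = 0)]
  obtain ⟨τ₀, hτ₀⟩ : ∃ τ₀ : {τ' : List ℕ // ValidCP t τ'}, fseg y σ β h t τ₀.1 φ₀ < S + ε := by
    apply exists_lt_of_ciInf_lt
    rw [← hfdp]; exact hφ₀
  unfold fseg at hτ₀
  obtain ⟨φs₀, hφs₀⟩ : ∃ φs₀ : ℕ → ℝ, segTotal y σ β h t τ₀.1 φs₀ φ₀ < S + ε :=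
    exists_lt_of_ciInf_lt hτ₀
  obtain ⟨ξ₀, hξ₀⟩ : ∃ ξ₀ : ℝ, segCost y σ t T ξ₀ φ < Cin + ε := by
    apply exists_lt_of_ciInf_lt
    rw [← hCin]; linarith
  -- upper bound on `fDP T φ`
  have hUB : fDP y σ β h T φ < S + ε + (Cin + ε) + K := by
    rcases eq_or_lt_of_le (Nat.succ_le_of_lt hT) with hT1 | hT2
    · -- T = t + 1
      have hτ'' : ValidCP T (τ₀.1 ++ [t]) := validCP_append_one τ₀.2 ht1 hT
      have step1 : fDP y σ β h T φ ≤ fseg y σ β h T (τ₀.1 ++ [t]) φ :=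
        fDP_le_fseg y σ β hβ' h hpos (by omega) hTn hτ'' φ
      have step2 : fseg y σ β h T (τ₀.1 ++ [t]) φ
          ≤ segTotal y σ β h T (τ₀.1 ++ [t])
              (fun i => if i < τ₀.1.length + 1 then φs₀ i else φ₀) φ :=
        fseg_le_segTotal y σ β hβ' h hpos (by omega) hTn hτ'' _ φ
      have step3 := segTotal_append_one y σ β h t T τ₀.1 φs₀ φ₀ φ
      have hCeq : segCost y σ t T φ₀ φ = segCost y σ t T ξ₀ φ := by
        rw [← hT1, segCost_succ, segCost_succ]
      have hh1 : h (T - t) = h 1 := by rw [show T - t = 1 by omega]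
      have hhn : (0:ℝ) ≤ h n := hpos n (by omega) (le_refl n)
      calc fDP y σ β h T φ ≤ segTotal y σ β h T (τ₀.1 ++ [t])
              (fun i => if i < τ₀.1.length + 1 then φs₀ i else φ₀) φ := le_trans step1 step2
        _ = segTotal y σ β h t τ₀.1 φs₀ φ₀ + segCost y σ t T φ₀ φ + h (T - t) + β := step3
        _ = segTotal y σ β h t τ₀.1 φs₀ φ₀ + segCost y σ t T ξ₀ φ + h 1 + β := by
              rw [hCeq, hh1]
        _ < S + ε + (Cin + ε) + K := by rw [hK]; linarith
    · -- t + 1 < T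
      have hτ'' : ValidCP T (τ₀.1 ++ [t, t+1]) := validCP_append_two τ₀.2 ht1 hT2
      set ψ' : ℝ := ξ₀ + (φ - ξ₀) * (((t+1:ℕ):ℝ) - ((t:ℕ):ℝ)) / (((T:ℕ):ℝ) - ((t:ℕ):ℝ))
        with hψ'
      have hsplit : segCost y σ t T ξ₀ φ
          = segCost y σ t (t+1) ξ₀ ψ' + segCost y σ (t+1) T ψ' φ :=
        segCost_split y σ (Nat.lt_succ_self t) hT2 _ _ _ hψ'
      have hunit : segCost y σ t (t+1) φ₀ ψ' = segCost y σ t (t+1) ξ₀ ψ' := by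
        rw [segCost_succ, segCost_succ]
      have step1 : fDP y σ β h T φ ≤ fseg y σ β h T (τ₀.1 ++ [t, t+1]) φ :=
        fDP_le_fseg y σ β hβ' h hpos (by omega) hTn hτ'' φ
      have step2 : fseg y σ β h T (τ₀.1 ++ [t, t+1]) φ
          ≤ segTotal y σ β h T (τ₀.1 ++ [t, t+1])
              (fun i => if i < τ₀.1.length + 1 then φs₀ i
                else if i = τ₀.1.length + 1 then φ₀ else ψ') φ :=
        fseg_le_segTotal y σ β hβ' h hpos (by omega) hTn hτ'' _ φ
      have step3 := segTotal_append_two y σ β h t T τ₀.1 φs₀ φ₀ ψ' φ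
      have hhTt : h (T - (t+1)) ≤ h n := hmono (T - (t+1)) n (by omega) (by omega) (le_refl n)
      calc fDP y σ β h T φ ≤ segTotal y σ β h T (τ₀.1 ++ [t, t+1])
              (fun i => if i < τ₀.1.length + 1 then φs₀ i
                else if i = τ₀.1.length + 1 then φ₀ else ψ') φ := le_trans step1 step2
        _ = segTotal y σ β h t τ₀.1 φs₀ φ₀ + segCost y σ t (t+1) φ₀ ψ' + h 1
              + segCost y σ (t+1) T ψ' φ + h (T - (t+1)) + (β + β) := step3
        _ = segTotal y σ β h t τ₀.1 φs₀ φ₀ + segCost y σ t T ξ₀ φ + h 1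
              + h (T - (t+1)) + (β + β) := by rw [hunit, hsplit]; ring
        _ < S + ε + (Cin + ε) + K := by rw [hK]; linarith
  -- lower bound on `fseg T τ φ`
  have hLB : Mt + Cin ≤ fseg y σ β h T τ φ := by
    rw [hMt, hCin]
    exact fseg_lower y σ β hβ' h hpos hmono ht1 hT hTn hτ φ
  have hfin : S + ε + (Cin + ε) + K < Mt + Cin := by rw [hε]; linarith
  linarith
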